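/- Let q be odd, n even, Γ a normal basis of K = F_{q^n} over k = F_q with trace Gram matrix T, S a Singer cycle in the multiplication algebra K ⊂ k^{n×n}, and A the Frobenius permutation matrix. Then for j ∈ {0,…,n-1} and i ∈ {1,…,q^n−1}, the matrix T A^j S^i is symmetric if and only if either j = 0, or j = n/2 and (q^{n/2}+1) divides i. -/

import Mathlib

open Matrix

theorem symmetric_T_Aj_Si_iff
    {k K : Type*} [Field k] [Fintype k] [Field K] [Fintype K] [Algebra k K]
    {n : ℕ} [NeZero n] (hn : Even n) (hq : Odd (Fintype.card k))
    (hcard : Fintype.card K = Fintype.card k ^ n)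
    (γ : K) (b : Module.Basis (Fin n) k K)
    (hb : ∀ i : Fin n, b i = γ ^ (Fintype.card k ^ (i : ℕ)))
    (A : Matrix (Fin n) (Fin n) k)
    (hA : ∀ i j : Fin n, A i j = if i = j + 1 then 1 else 0)
    (σ : K) (hσ : orderOf σ = Fintype.card K - 1)
    (T : Matrix (Fin n) (Fin n) k)
    (hT : T = Matrix.of fun i j : Fin n => Algebra.trace k K (b i * b j))
    (S : Matrix (Fin n) (Fin n) k)
    (hS : S = Algebra.leftMulMatrix b σ) :
    ∀ j : ℕ, j < n → ∀ i : ℕ, 1 ≤ i → i ≤ Fintype.card k ^ n - 1 →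
      ((T * A ^ j * S ^ i)ᵀ = T * A ^ j * S ^ i ↔
        (j = 0 ∨ (j = n / 2 ∧ (Fintype.card k ^ (n / 2) + 1) ∣ i))) := by
  classical
  intro j hj i hi1 hi2
  set q := Fintype.card k with hqdef
  have hq1 : 1 < q := Fintype.one_lt_card
  have hnpos : 0 < n := Nat.pos_of_ne_zero (NeZero.ne n)
  have hneven : n % 2 = 0 := Nat.even_iff.mp hn
  have hn2 : 2 ≤ n := by omega
  have hqn1 : 1 < q ^ n := Nat.one_lt_pow (by omega) hq1
  have hfixk : ∀ c : k, c ^ q = c := fun c => FiniteField.pow_card c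
  have hKfix : ∀ x : K, x ^ q ^ n = x := fun x => by
    rw [hqdef, ← hcard]; exact FiniteField.pow_card x
  -- Frobenius ring hom
  obtain ⟨m, hp, hm⟩ := FiniteField.card k (ringChar k)
  haveI : Fact (Nat.Prime (ringChar k)) := ⟨hp⟩
  haveI : CharP K (ringChar k) := charP_of_injective_algebraMap (algebraMap k K).injective _
  set φ : K →+* K := iterateFrobenius K (ringChar k) (m : ℕ) with hφdef
  have hφ : ∀ x : K, φ x = x ^ q := by
    intro x; rw [hφdef, iterateFrobenius_def, hqdef, hm]
  -- Frobenius on the normal basis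
  have hval1 : ((1 : Fin n) : ℕ) = 1 := by
    rw [Fin.val_one', Nat.mod_eq_of_lt (by omega)]
  have hsucc : ∀ l : Fin n, ((l + 1 : Fin n) : ℕ) = ((l : ℕ) + 1) % n := by
    intro l; rw [Fin.val_add, hval1]
  have hbq : ∀ l : Fin n, (b l) ^ q = b (l + 1) := by
    intro l
    rw [hb l, hb (l + 1), ← pow_mul, ← pow_succ]
    by_cases hl : (l : ℕ) + 1 < n
    · rw [hsucc, Nat.mod_eq_of_lt hl]
    · have hlt := l.isLt
      have hl' : (l : ℕ) + 1 = n := by omega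
      rw [hsucc, hl', Nat.mod_self, pow_zero, pow_one, hKfix]
  -- Frobenius on coordinates
  have hrepr : ∀ (x : K) (r : Fin n), b.repr (x ^ q) r = b.repr x (r - 1) := by
    intro x r
    have hx : x ^ q = ∑ l : Fin n, b.repr x (l - 1) • b l := by
      conv_lhs => rw [← b.sum_repr x, ← hφ, _root_.map_sum]
      rw [show (fun l => φ (b.repr x l • b l)) = fun l : Fin n => b.repr x l • b (l + 1) from ?_]
      · exact Fintype.sum_equiv (Equiv.addRight (1 : Fin n)) _ _
          (fun l => by simp [add_sub_cancel_right])
      · funext l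
        rw [Algebra.smul_def, _root_.map_mul, hφ, hφ, ← _root_.map_pow, hfixk, ← Algebra.smul_def, hbq]
    rw [hx]
    exact congrFun (b.repr_sum_self _) r
  -- entry lemmas for A
  have hAmul : ∀ (N : Matrix (Fin n) (Fin n) k) (r s : Fin n), (A * N) r s = N (r - 1) s := by
    intro N r s
    rw [Matrix.mul_apply, Finset.sum_eq_single (r - 1)]
    · rw [hA, if_pos (by rw [sub_add_cancel]), one_mul]
    · intro l _ hl
      rw [hA, if_neg, zero_mul]
      intro h; exact hl (by rw [h, add_sub_cancel_right])
    · intro h; exact absurd (Finset.mem_univ _) h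
  have hmulA : ∀ (N : Matrix (Fin n) (Fin n) k) (r s : Fin n), (N * A) r s = N r (s + 1) := by
    intro N r s
    rw [Matrix.mul_apply, Finset.sum_eq_single (s + 1)]
    · rw [hA, if_pos rfl, mul_one]
    · intro l _ hl; rw [hA, if_neg hl, mul_zero]
    · intro h; exact absurd (Finset.mem_univ _) h
  open Fin.NatCast in
  have hApow : ∀ (t : ℕ) (r s : Fin n), (A ^ t) r s = if r = s + (t : Fin n) then 1 else 0 := by
    intro t
    induction t with
    | zero => intro r s; simp [Matrix.one_apply]
    | succ t ih =>
      intro r s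
      rw [pow_succ, hmulA, ih]
      have : (s + 1) + (t : Fin n) = s + ((t + 1 : ℕ) : Fin n) := by push_cast; abel
      rw [this]
  have hAn : A ^ n = 1 := by
    ext r s
    rw [hApow, Matrix.one_apply, Fin.natCast_self, add_zero]
  have hA1 : Aᵀ * A = 1 := by
    ext r s
    rw [Matrix.mul_apply, Finset.sum_eq_single (r + 1)]
    · rw [transpose_apply, hA, if_pos rfl, one_mul, hA, Matrix.one_apply]
      by_cases h : r = s
      · rw [if_pos (by rw [h]), if_pos h]
      · rw [if_neg (fun hc => h (by exact add_right_cancel hc)), if_neg h]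
    · intro l _ hl
      rw [transpose_apply, hA, if_neg hl, zero_mul]
    · intro h; exact absurd (Finset.mem_univ _) h
  have hAtA : ∀ t : ℕ, (A ^ t)ᵀ * A ^ t = 1 := by
    intro t
    induction t with
    | zero => simp
    | succ t ih =>
      rw [pow_succ, transpose_mul, mul_assoc, ← mul_assoc ((A ^ t)ᵀ), ih, one_mul, hA1]
  -- A conjugation on multiplication matrices
  have hAM : ∀ x : K, A * Algebra.leftMulMatrix b x = Algebra.leftMulMatrix b (x ^ q) * A := by
    intro x
    ext r s
    rw [hAmul, hmulA, Algebra.leftMulMatrix_eq_repr_mul, Algebra.leftMulMatrix_eq_repr_mul,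
      show x ^ q * b (s + 1) = (x * b s) ^ q by rw [mul_pow, hbq], hrepr]
  have hAMpow : ∀ (t : ℕ) (x : K),
      A ^ t * Algebra.leftMulMatrix b x = Algebra.leftMulMatrix b (x ^ q ^ t) * A ^ t := by
    intro t
    induction t with
    | zero => intro x; simp
    | succ t ih =>
      intro x
      rw [pow_succ' A t, mul_assoc, ih, ← mul_assoc, hAM, pow_succ q t, pow_mul, mul_assoc,
        ← pow_succ' A t]
  have hnm1 : n - 1 + 1 = n := Nat.succ_pred_eq_of_pos hnpos
  -- trace is Frobenius invariant
  have htrq : ∀ y : K, Algebra.trace k K (y ^ q) = Algebra.trace k K y := by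
    intro y
    rw [Algebra.trace_eq_matrix_trace b, Algebra.trace_eq_matrix_trace b]
    have e1 : Algebra.leftMulMatrix b (y ^ q) = A * Algebra.leftMulMatrix b y * A ^ (n - 1) := by
      have h2 : Algebra.leftMulMatrix b (y ^ q) * A * A ^ (n - 1)
          = A * Algebra.leftMulMatrix b y * A ^ (n - 1) := by rw [← hAM]
      rwa [mul_assoc, ← pow_succ' A (n - 1), hnm1, hAn, mul_one] at h2
    rw [e1, Matrix.trace_mul_comm, ← mul_assoc, ← pow_succ, hnm1, hAn, one_mul]
  -- A commutes with T
  have hTA : A * T = T * A := by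
    ext r s
    rw [hAmul, hmulA, hT]
    simp only [Matrix.of_apply]
    conv_rhs => rw [show b r * b (s + 1) = (b (r - 1) * b s) ^ q by
      rw [mul_pow, hbq, hbq, sub_add_cancel]]
    rw [htrq]
  have hTApow : ∀ t : ℕ, A ^ t * T = T * A ^ t := fun t =>
    (Commute.pow_left (hTA : Commute A T) t)
  -- T times a multiplication matrix is symmetric
  have hTM : ∀ (x : K) (r s : Fin n),
      (T * Algebra.leftMulMatrix b x) r s = Algebra.trace k K (b r * (x * b s)) := by
    intro x r s
    rw [Matrix.mul_apply]
    conv_rhs => rw [show x * b s = ∑ l : Fin n, b.repr (x * b s) l • b l from (b.sum_repr _).symm]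
    rw [Finset.mul_sum, _root_.map_sum]
    refine Finset.sum_congr rfl fun l _ => ?_
    rw [hT]
    simp only [Matrix.of_apply]
    rw [Algebra.leftMulMatrix_eq_repr_mul, mul_smul_comm, _root_.map_smul, smul_eq_mul]
    ring
  have hTsym : ∀ x : K, (T * Algebra.leftMulMatrix b x)ᵀ = T * Algebra.leftMulMatrix b x := by
    intro x
    ext r s
    rw [transpose_apply, hTM, hTM]
    congr 1
    ring
  -- T is invertible
  haveI : FiniteDimensional k K := Module.Finite.of_basis b
  have hTdet : IsUnit T.det := by
    have hTmat : T = LinearMap.BilinForm.toMatrix b (Algebra.traceForm k K) := by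
      ext r s
      rw [Algebra.traceForm_toMatrix, hT]
      rfl
    rw [isUnit_iff_ne_zero, hTmat]
    exact (LinearMap.BilinForm.nondegenerate_iff_det_ne_zero b).mp (traceForm_nondegenerate k K)
  haveI : Invertible T := T.invertibleOfIsUnitDet hTdet
  have hTcancel : ∀ P Q : Matrix (Fin n) (Fin n) k, T * P = T * Q ↔ P = Q := by
    intro P Q
    constructor
    · intro h
      have h2 := congrArg (fun Z => ⅟T * Z) h
      simpa only [← mul_assoc, invOf_mul_self, one_mul] using h2
    · intro h; rw [h]
  -- order of σ
  have hord : orderOf σ = q ^ n - 1 := by rw [hσ, hcard, hqdef]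
  have hσ0 : σ ≠ 0 := by
    intro h0
    have h1 := pow_orderOf_eq_one σ
    rw [hord, h0, zero_pow (by omega : q ^ n - 1 ≠ 0)] at h1
    exact zero_ne_one h1
  have hordυ : orderOf (Units.mk0 σ hσ0) = q ^ n - 1 := by
    rw [← orderOf_units, Units.val_mk0, hord]
  have hσeq : ∀ a c : ℕ, σ ^ a = σ ^ c ↔ a ≡ c [MOD q ^ n - 1] := by
    intro a c
    constructor
    · intro h
      have h2 : (Units.mk0 σ hσ0) ^ a = (Units.mk0 σ hσ0) ^ c :=
        Units.ext (by simpa using h)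
      rw [pow_eq_pow_iff_modEq, hordυ] at h2
      exact h2
    · intro h
      have h2 : (Units.mk0 σ hσ0) ^ a = (Units.mk0 σ hσ0) ^ c := by
        rw [pow_eq_pow_iff_modEq, hordυ]; exact h
      simpa using congrArg Units.val h2
  have Minj : Function.Injective (Algebra.leftMulMatrix b) := Algebra.leftMulMatrix_injective b
  -- divisibility of q^n-1 into q^t-1 forces n ∣ t
  have hpowdvd : ∀ t : ℕ, (q ^ n - 1) ∣ (q ^ t - 1) → n ∣ t := by
    intro t hd
    have h1 : (q ^ n) ≡ 1 [MOD q ^ n - 1] :=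
      ((Nat.modEq_iff_dvd' (Nat.one_le_of_lt hqn1)).mpr dvd_rfl).symm
    have hmod : q ^ t ≡ q ^ (t % n) [MOD q ^ n - 1] := by
      conv_lhs => rw [← Nat.div_add_mod t n, pow_add, pow_mul]
      calc (q ^ n) ^ (t / n) * q ^ (t % n)
          ≡ 1 ^ (t / n) * q ^ (t % n) [MOD q ^ n - 1] := Nat.ModEq.mul_right _ (h1.pow _)
        _ = q ^ (t % n) := by rw [one_pow, one_mul]
    have h2 : q ^ (t % n) ≡ 1 [MOD q ^ n - 1] :=
      hmod.symm.trans (((Nat.modEq_iff_dvd' (Nat.one_le_pow _ _ (by omega))).mpr hd).symm)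
    have h3 : (q ^ n - 1) ∣ (q ^ (t % n) - 1) :=
      (Nat.modEq_iff_dvd' (Nat.one_le_pow _ _ (by omega))).mp h2.symm
    have h4 : q ^ (t % n) - 1 < q ^ n - 1 := by
      have := Nat.pow_lt_pow_right hq1 (Nat.mod_lt t hnpos)
      omega
    have h5 : q ^ (t % n) - 1 = 0 := Nat.eq_zero_of_dvd_of_lt h3 h4
    have h6 : t % n = 0 := by
      by_contra hne
      have := Nat.one_lt_pow hne hq1
      omega
    exact Nat.dvd_of_mod_eq_zero h6
  -- the key reduction
  have hSi : S ^ i = Algebra.leftMulMatrix b (σ ^ i) := by rw [hS, ← _root_.map_pow]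
  have hBX : ∀ x : K, A ^ j * (T * Algebra.leftMulMatrix b x) * A ^ j
      = T * (Algebra.leftMulMatrix b (x ^ q ^ j) * A ^ (2 * j)) := by
    intro x
    have h1 : A ^ j * (T * Algebra.leftMulMatrix b x) * A ^ j
        = (A ^ j * T) * (Algebra.leftMulMatrix b x * A ^ j) := by
      simp only [mul_assoc]
    rw [h1, hTApow j, mul_assoc]
    congr 1
    rw [← mul_assoc, hAMpow j x, mul_assoc, ← pow_add, ← two_mul]
  have key : ((T * A ^ j * S ^ i)ᵀ = T * A ^ j * S ^ i)
      ↔ Algebra.leftMulMatrix b ((σ ^ i) ^ q ^ j) * A ^ (2 * j)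
        = Algebra.leftMulMatrix b (σ ^ i) := by
    rw [hSi]
    have hX : T * A ^ j * Algebra.leftMulMatrix b (σ ^ i)
        = A ^ j * (T * Algebra.leftMulMatrix b (σ ^ i)) := by
      rw [← mul_assoc, ← hTApow j]
    rw [hX, transpose_mul, hTsym]
    have hBBt : A ^ j * (A ^ j)ᵀ = 1 := mul_eq_one_comm.mp (hAtA j)
    constructor
    · intro h
      have h2 := congrArg (fun Z => Z * A ^ j) h
      rw [mul_assoc, hAtA j, mul_one] at h2
      -- h2 : T * M σ^i = A^j * (T * M σ^i) * A^j
      have h3 := h2.trans (hBX (σ ^ i))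
      exact ((hTcancel _ _).mp h3).symm
    · intro h
      have h3 : T * Algebra.leftMulMatrix b (σ ^ i)
          = A ^ j * (T * Algebra.leftMulMatrix b (σ ^ i)) * A ^ j := by
        rw [hBX (σ ^ i), h]
      have h4 := congrArg (fun Z => Z * (A ^ j)ᵀ) h3
      rw [mul_assoc (A ^ j * (T * Algebra.leftMulMatrix b (σ ^ i))), hBBt, mul_one] at h4
      exact h4
  rw [key]
  have hiq : (σ ^ i) ^ q ^ j = σ ^ (i * q ^ j) := by rw [← pow_mul]
  by_cases hj0 : j = 0
  · subst hj0
    refine iff_of_true ?_ (Or.inl rfl)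
    simp
  · by_cases h2j : 2 * j = n
    · have hjn2 : j = n / 2 := by omega
      subst hjn2
      rw [h2j, hAn, mul_one, hiq, Minj.eq_iff, hσeq]
      have h2a : 2 ≤ q ^ (n / 2) := by
        have h1 : q ≤ q ^ (n / 2) := Nat.le_self_pow (by omega) q
        omega
      have hqn_fact : q ^ n - 1 = (q ^ (n / 2) - 1) * (q ^ (n / 2) + 1) := by
        have h1 : q ^ n = q ^ (n / 2) * q ^ (n / 2) := by rw [← pow_add]; congr 1; omega
        obtain ⟨y, hy⟩ : ∃ y, q ^ (n / 2) = y + 1 := ⟨q ^ (n / 2) - 1, by omega⟩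
        have h2 : (q ^ (n / 2) - 1) * (q ^ (n / 2) + 1) + 1 = q ^ (n / 2) * q ^ (n / 2) := by
          rw [hy, Nat.add_sub_cancel]
          ring
        omega
      have hle : i ≤ i * q ^ (n / 2) := Nat.le_mul_of_pos_right i (by omega)
      have he : i * q ^ (n / 2) - i = (q ^ (n / 2) - 1) * i := by
        obtain ⟨y, hy⟩ : ∃ y, q ^ (n / 2) = y + 1 := ⟨q ^ (n / 2) - 1, by omega⟩
        rw [hy, Nat.add_sub_cancel]
        rw [Nat.sub_eq_iff_eq_add (by rw [← hy]; exact hle)]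
        ring
      have hiff2 : (i * q ^ (n / 2) ≡ i [MOD q ^ n - 1]) ↔ (q ^ (n / 2) + 1) ∣ i := by
        constructor
        · intro h
          have hd : (q ^ n - 1) ∣ (i * q ^ (n / 2) - i) := (Nat.modEq_iff_dvd' hle).mp h.symm
          rw [he, hqn_fact] at hd
          have hx1 : 0 < q ^ (n / 2) - 1 := by omega
          exact (Nat.mul_dvd_mul_iff_left hx1).mp hd
        · rintro ⟨t, rfl⟩
          have heq : (q ^ (n / 2) + 1) * t * q ^ (n / 2) - (q ^ (n / 2) + 1) * t
              = (q ^ n - 1) * t := by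
            rw [show (q ^ (n / 2) + 1) * t * q ^ (n / 2) - (q ^ (n / 2) + 1) * t
                = (q ^ (n / 2) - 1) * ((q ^ (n / 2) + 1) * t) from he, hqn_fact]
            ring
          exact ((Nat.modEq_iff_dvd' hle).mpr ⟨t, heq⟩).symm
      rw [hiff2]
      constructor
      · intro h
        exact Or.inr ⟨rfl, h⟩
      · rintro (h | ⟨-, h⟩)
        · exact absurd h hj0
        · exact h
    · refine iff_of_false ?_ ?_
      · intro hCeq
        rw [hiq] at hCeq
        have hu0 : σ ^ (i * q ^ j) ≠ 0 := pow_ne_zero _ hσ0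
        have hA2j : A ^ (2 * j)
            = Algebra.leftMulMatrix b ((σ ^ (i * q ^ j))⁻¹ * σ ^ i) := by
          have h5 := congrArg
            (fun Z => Algebra.leftMulMatrix b ((σ ^ (i * q ^ j))⁻¹) * Z) hCeq
          rw [← mul_assoc, ← _root_.map_mul, inv_mul_cancel₀ hu0, _root_.map_one, one_mul] at h5
          rw [_root_.map_mul]
          exact h5
        have hcomm := hAMpow (2 * j) σ
        rw [hA2j, ← _root_.map_mul, mul_comm _ σ, _root_.map_mul] at hcomm
        -- hcomm : M σ * M y = M (σ^{q^{2j}}) * M y  -- where M y = A^{2j}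
        rw [← hA2j] at hcomm
        have hABt : A ^ (2 * j) * (A ^ (2 * j))ᵀ = 1 := mul_eq_one_comm.mp (hAtA (2 * j))
        have h6 := congrArg (fun Z => Z * (A ^ (2 * j))ᵀ) hcomm
        rw [mul_assoc, hABt, mul_one, mul_assoc, hABt, mul_one] at h6
        have h7 : σ ^ (1 : ℕ) = σ ^ (q ^ (2 * j)) := by
          rw [pow_one]
          exact Minj h6
        rw [hσeq] at h7
        have h8 : (q ^ n - 1) ∣ (q ^ (2 * j) - 1) :=
          (Nat.modEq_iff_dvd' (Nat.one_le_pow _ _ (by omega))).mp h7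
        obtain ⟨c, hc⟩ := hpowdvd (2 * j) h8
        have hcle : c ≤ 1 := by
          by_contra hcgt
          have : n * 2 ≤ n * c := Nat.mul_le_mul_left n (by omega)
          omega
        interval_cases c <;> omega
      · rintro (h | ⟨h, -⟩)
        · exact hj0 h
        · apply h2j
          omega
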